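/- For all integers N ≥ 3 and n ≥ 3, the ideal I_{N,n} equals the intersection ⋂_{i=0}^{N} J_i, where J_i ⊆ ℂ[x_0, …, x_N] is the ideal of all polynomials vanishing at every point x ∈ ℂ^{N+1} whose coordinate vector with the i-th entry deleted lies in V_{N−1,n} ⊆ ℂ^N (so J_i is the ideal of the cone with vertex the i-th coordinate point over V_{N−1,n} placed in the hyperplane x_i = 0). -/

import Mathlib

open MvPolynomial Finset

/-- `Vset n m ⊆ ℂ^m` is the union of the codimension-2 flats of the Fermat
arrangement: the flats `{x_i = x_j = 0}` for `i < j`, and the flats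
`{x_j = δ x_i, x_k = ε x_i}` for pairwise distinct `i, j, k` and `n`-th roots of
unity `δ, ε`.  (For `m = N + 1` this is the set `V_{N,n}`.) -/
def Vset (n m : ℕ) : Set (Fin m → ℂ) :=
  {x | (∃ i j : Fin m, i < j ∧ x i = 0 ∧ x j = 0) ∨
       (∃ i j k : Fin m, i ≠ j ∧ i ≠ k ∧ j ≠ k ∧
         ∃ δ ε : ℂ, δ ^ n = 1 ∧ ε ^ n = 1 ∧ x j = δ * x i ∧ x k = ε * x i)}

lemma exists_ne3 {N : ℕ} (hN : 3 ≤ N) (i j k : Fin (N + 1)) :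
    ∃ ℓ : Fin (N + 1), ℓ ≠ i ∧ ℓ ≠ j ∧ ℓ ≠ k := by
  by_contra h
  push_neg at h
  have hsub : (Finset.univ : Finset (Fin (N + 1))) ⊆ {i, j, k} := by
    intro ℓ _
    simp only [Finset.mem_insert, Finset.mem_singleton]
    by_cases h1 : ℓ = i
    · exact Or.inl h1
    by_cases h2 : ℓ = j
    · exact Or.inr (Or.inl h2)
    · exact Or.inr (Or.inr (h ℓ h1 h2))
  have hcard := Finset.card_le_card hsub
  have h3 : ({i, j, k} : Finset (Fin (N + 1))).card ≤ 3 := by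
    apply le_trans (Finset.card_insert_le _ _)
    have := Finset.card_insert_le j ({k} : Finset (Fin (N + 1)))
    simp at this ⊢
    omega
  simp [Finset.card_univ] at hcard
  omega

lemma Vset_eq_iUnion (N n : ℕ) (hN : 3 ≤ N) :
    Vset n (N + 1) = ⋃ i : Fin (N + 1), {x | (x ∘ i.succAbove) ∈ Vset n N} := by
  ext x
  simp only [Set.mem_iUnion, Set.mem_setOf_eq]
  constructor
  · rintro (⟨i, j, hij, hxi, hxj⟩ | ⟨i, j, k, hij, hik, hjk, δ, ε, hδ, hε, hj, hk⟩)
    · obtain ⟨ℓ, hℓi, hℓj, -⟩ := exists_ne3 hN i j i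
      obtain ⟨a, ha⟩ := Fin.exists_succAbove_eq (Ne.symm hℓi)
      obtain ⟨b, hb⟩ := Fin.exists_succAbove_eq (Ne.symm hℓj)
      refine ⟨ℓ, Or.inl ?_⟩
      have hab : a < b := by
        rw [← (Fin.strictMono_succAbove ℓ).lt_iff_lt, ha, hb]; exact hij
      exact ⟨a, b, hab, by simp [Function.comp, ha, hxi], by simp [Function.comp, hb, hxj]⟩
    · obtain ⟨ℓ, hℓi, hℓj, hℓk⟩ := exists_ne3 hN i j k
      obtain ⟨a, ha⟩ := Fin.exists_succAbove_eq (Ne.symm hℓi)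
      obtain ⟨b, hb⟩ := Fin.exists_succAbove_eq (Ne.symm hℓj)
      obtain ⟨c, hc⟩ := Fin.exists_succAbove_eq (Ne.symm hℓk)
      refine ⟨ℓ, Or.inr ⟨a, b, c, ?_, ?_, ?_, δ, ε, hδ, hε, ?_, ?_⟩⟩
      · intro h; exact hij (by rw [← ha, ← hb, h])
      · intro h; exact hik (by rw [← ha, ← hc, h])
      · intro h; exact hjk (by rw [← hb, ← hc, h])
      · simp [Function.comp, ha, hb, hj]
      · simp [Function.comp, ha, hc, hk]
  · rintro ⟨i, (⟨a, b, hab, h1, h2⟩ | ⟨a, b, c, hab, hac, hbc, δ, ε, hδ, hε, h1, h2⟩)⟩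
    · exact Or.inl ⟨i.succAbove a, i.succAbove b, (Fin.strictMono_succAbove i) hab, h1, h2⟩
    · refine Or.inr ⟨i.succAbove a, i.succAbove b, i.succAbove c, ?_, ?_, ?_,
        δ, ε, hδ, hε, h1, h2⟩
      · exact fun h => hab (Fin.succAbove_right_injective h)
      · exact fun h => hac (Fin.succAbove_right_injective h)
      · exact fun h => hbc (Fin.succAbove_right_injective h)

/-- `I_{N,n}` is the intersection over `i = 0, …, N` of the ideals of the cones
with vertex the `i`-th coordinate point over `V_{N-1,n}` placed in the hyperplane
`x_i = 0`; the cone over `V_{N-1,n}` consists of the points `x ∈ ℂ^{N+1}` whose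
coordinate vector with the `i`-th entry deleted lies in `V_{N-1,n} ⊆ ℂ^N`. -/
theorem ideal_eq_inter_cone_ideals (N n : ℕ) (hN : 3 ≤ N) (hn : 3 ≤ n) :
    MvPolynomial.vanishingIdeal ℂ (Vset n (N + 1)) =
      ⨅ i : Fin (N + 1),
        MvPolynomial.vanishingIdeal ℂ
          {x : Fin (N + 1) → ℂ | (x ∘ i.succAbove) ∈ Vset n N} := by
  rw [Vset_eq_iUnion N n hN]
  ext p
  simp only [MvPolynomial.mem_vanishingIdeal_iff, Ideal.mem_iInf, Set.mem_iUnion,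
    Set.mem_setOf_eq]
  constructor
  · intro h i x hx
    exact h x ⟨i, hx⟩
  · rintro h x ⟨i, hx⟩
    exact h i x hx
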